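/- Let D and D̃ be self-adjoint operators on a complex Hilbert space H with dom(D) = dom(D̃), and suppose there is a constant A ≥ 0 such that ‖(D̃ − D)u‖ ≤ A(‖Du‖ + ‖u‖) for all u ∈ dom(D). Then for all t ∈ (0,1], the resolvents R_t = (I+itD)⁻¹ and R̃_t = (I+itD̃)⁻¹ satisfy ‖R̃_t − R_t‖ ≤ 2A. -/

import Mathlib

open scoped ComplexConjugate

local notation "⟪" x ", " y "⟫" => @inner ℂ _ _ x y

lemma stmt14_sym {H : Type*} [NormedAddCommGroup H] [InnerProductSpace ℂ H] [CompleteSpace H]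
    (D : H →ₗ.[ℂ] H) (hD : IsSelfAdjoint D) :
    ∀ x y : D.domain, ⟪D x, (y : H)⟫ = ⟪(x : H), D y⟫ := by
  have hdense := hD.dense_domain
  have h := LinearPMap.adjoint_isFormalAdjoint hdense
  rw [LinearPMap.isSelfAdjoint_def.mp hD] at h
  exact h

lemma stmt14_key {H : Type*} [NormedAddCommGroup H] [InnerProductSpace ℂ H] [CompleteSpace H]
    (D : H →ₗ.[ℂ] H) (hsym : ∀ x y : D.domain, ⟪D x, (y : H)⟫ = ⟪(x : H), D y⟫)
    (t : ℝ) (x : D.domain) :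
    ‖(x : H) + (Complex.I * (t : ℂ)) • D x‖ ^ 2 = ‖(x : H)‖ ^ 2 + t ^ 2 * ‖D x‖ ^ 2 := by
  have him : (⟪(x : H), D x⟫).im = 0 := by
    have h1 : conj ⟪(x : H), D x⟫ = ⟪(x : H), D x⟫ := by
      rw [inner_conj_symm]; exact hsym x x
    have := Complex.conj_eq_iff_im.mp h1
    exact this
  have hre : RCLike.re ⟪(x : H), (Complex.I * (t : ℂ)) • D x⟫ = 0 := by
    rw [inner_smul_right]
    simp [Complex.mul_re, Complex.mul_im, him]
  rw [@norm_add_sq ℂ, hre, norm_smul]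
  simp [Complex.norm_I, abs_of_nonneg, mul_pow, sq_abs]

lemma stmt14_norm_le {H : Type*} [NormedAddCommGroup H] [InnerProductSpace ℂ H] [CompleteSpace H]
    (D : H →ₗ.[ℂ] H) (hsym : ∀ x y : D.domain, ⟪D x, (y : H)⟫ = ⟪(x : H), D y⟫)
    (t : ℝ) (x : D.domain) :
    ‖(x : H)‖ ≤ ‖(x : H) + (Complex.I * (t : ℂ)) • D x‖ ∧
    t * ‖D x‖ ≤ ‖(x : H) + (Complex.I * (t : ℂ)) • D x‖ := by
  have hk := stmt14_key D hsym t x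
  constructor
  · nlinarith [norm_nonneg ((x : H) + (Complex.I * (t : ℂ)) • D x), norm_nonneg (x : H),
      sq_nonneg (t * ‖D x‖), norm_nonneg (D x)]
  · nlinarith [norm_nonneg ((x : H) + (Complex.I * (t : ℂ)) • D x), norm_nonneg (x : H),
      sq_nonneg (t * ‖D x‖), norm_nonneg (D x), sq_nonneg ‖(x:H)‖]


/-- Let `D`, `D̃` be self-adjoint operators on a complex Hilbert space with
`dom D = dom D̃`, and suppose `‖(D̃ − D)u‖ ≤ A (‖Du‖ + ‖u‖)` for all `u ∈ dom D`.
Then for all `t ∈ (0,1]`, the resolvents `R t = (I + itD)⁻¹` and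
`R' t = (I + itD̃)⁻¹` satisfy `‖R' t − R t‖ ≤ 2A`. -/
theorem stmt14 {H : Type*} [NormedAddCommGroup H] [InnerProductSpace ℂ H] [CompleteSpace H]
    (D D' : H →ₗ.[ℂ] H) (hD : IsSelfAdjoint D) (hD' : IsSelfAdjoint D')
    (hdom : D.domain = D'.domain)
    (A : ℝ) (hA : 0 ≤ A)
    (hrel : ∀ (u : H) (hu : u ∈ D.domain) (hu' : u ∈ D'.domain),
        ‖D' ⟨u, hu'⟩ - D ⟨u, hu⟩‖ ≤ A * (‖D ⟨u, hu⟩‖ + ‖u‖))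
    (R R' : ℝ → H →L[ℂ] H)
    (hR : ∀ t : ℝ, t ≠ 0 → ∀ u : H,
      ∃ h1 : R t u ∈ D.domain,
        R t u + (Complex.I * (t : ℂ)) • D ⟨R t u, h1⟩ = u)
    (hR' : ∀ t : ℝ, t ≠ 0 → ∀ u : H,
      ∃ h1 : R' t u ∈ D'.domain,
        R' t u + (Complex.I * (t : ℂ)) • D' ⟨R' t u, h1⟩ = u) :
    ∀ t : ℝ, t ∈ Set.Ioc (0 : ℝ) 1 → ‖R' t - R t‖ ≤ 2 * A := by
  have hsym := stmt14_sym D hD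
  have hsym' := stmt14_sym D' hD'
  intro t ht
  obtain ⟨ht0, ht1⟩ := ht
  have htne : t ≠ 0 := ne_of_gt ht0
  have hR'contr : ∀ v : H, ‖R' t v‖ ≤ ‖v‖ := by
    intro v
    obtain ⟨h2, e2⟩ := hR' t htne v
    have := (stmt14_norm_le D' hsym' t ⟨R' t v, h2⟩).1
    simpa [e2] using this
  refine ContinuousLinearMap.opNorm_le_bound _ (by positivity) fun v => ?_
  obtain ⟨h1, e1⟩ := hR t htne v
  have h1' : R t v ∈ D'.domain := hdom ▸ h1
  have hnl := stmt14_norm_le D hsym t ⟨R t v, h1⟩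
  have hu_le : ‖R t v‖ ≤ ‖v‖ := by simpa [e1] using hnl.1
  have hDu_le : t * ‖D ⟨R t v, h1⟩‖ ≤ ‖v‖ := by simpa [e1] using hnl.2
  set z : H := (Complex.I * (t : ℂ)) • (D' ⟨R t v, h1'⟩ - D ⟨R t v, h1⟩) with hz
  have hfix : R' t (v + z) = R t v := by
    obtain ⟨h2, e2⟩ := hR' t htne (v + z)
    have hvz : R t v + (Complex.I * (t : ℂ)) • D' ⟨R t v, h1'⟩ = v + z := by
      rw [hz, smul_sub]
      calc R t v + (Complex.I * (t : ℂ)) • D' ⟨R t v, h1'⟩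
          = (R t v + (Complex.I * (t : ℂ)) • D ⟨R t v, h1⟩)
            + ((Complex.I * (t : ℂ)) • D' ⟨R t v, h1'⟩
              - (Complex.I * (t : ℂ)) • D ⟨R t v, h1⟩) := by abel
        _ = v + ((Complex.I * (t : ℂ)) • D' ⟨R t v, h1'⟩
              - (Complex.I * (t : ℂ)) • D ⟨R t v, h1⟩) := by rw [e1]
    have hsub : R' t (v + z) - R t v ∈ D'.domain := sub_mem h2 h1'
    have hDsub : D' ⟨R' t (v + z) - R t v, hsub⟩ = D' ⟨R' t (v + z), h2⟩ - D' ⟨R t v, h1'⟩ := by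
      have : (⟨R' t (v + z) - R t v, hsub⟩ : D'.domain) = ⟨R' t (v + z), h2⟩ - ⟨R t v, h1'⟩ := rfl
      rw [this, LinearPMap.map_sub]
    have hzero : (R' t (v + z) - R t v)
        + (Complex.I * (t : ℂ)) • D' ⟨R' t (v + z) - R t v, hsub⟩ = 0 :=
      calc (R' t (v + z) - R t v)
            + (Complex.I * (t : ℂ)) • D' ⟨R' t (v + z) - R t v, hsub⟩
          = (R' t (v + z) + (Complex.I * (t : ℂ)) • D' ⟨R' t (v + z), h2⟩)
            - (R t v + (Complex.I * (t : ℂ)) • D' ⟨R t v, h1'⟩) := by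
              rw [hDsub, smul_sub]; abel
        _ = (v + z) - (v + z) := by rw [e2, hvz]
        _ = 0 := sub_self _
    have hle := (stmt14_norm_le D' hsym' t ⟨R' t (v + z) - R t v, hsub⟩).1
    rw [hzero] at hle
    simp only [norm_zero] at hle
    exact sub_eq_zero.mp (norm_le_zero_iff.mp hle)
  have hsplit : (R' t - R t) v = -(R' t z) := by
    have hadd : R' t (v + z) = R' t v + R' t z := map_add _ _ _
    rw [hfix] at hadd
    simp only [ContinuousLinearMap.sub_apply]
    rw [hadd]; abel
  rw [hsplit, norm_neg]
  have hzle : ‖z‖ ≤ 2 * A * ‖v‖ := by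
    have hn : ‖z‖ = t * ‖D' ⟨R t v, h1'⟩ - D ⟨R t v, h1⟩‖ := by
      rw [hz, norm_smul]
      simp [Complex.norm_I, abs_of_pos ht0, Complex.norm_def,
        Complex.normSq_mul]
    have hrel' := hrel (R t v) h1 h1'
    have htu : t * ‖(R t v : H)‖ ≤ ‖v‖ := by
      nlinarith [norm_nonneg (R t v), norm_nonneg v]
    calc ‖z‖ = t * ‖D' ⟨R t v, h1'⟩ - D ⟨R t v, h1⟩‖ := hn
      _ ≤ t * (A * (‖D ⟨R t v, h1⟩‖ + ‖R t v‖)) := by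
          apply mul_le_mul_of_nonneg_left hrel' (le_of_lt ht0)
      _ = A * (t * ‖D ⟨R t v, h1⟩‖) + A * (t * ‖R t v‖) := by ring
      _ ≤ A * ‖v‖ + A * ‖v‖ := by
          gcongr
      _ = 2 * A * ‖v‖ := by ring
  exact le_trans (hR'contr z) hzle
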